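/- Let f : ℝ → [0,∞) be a decreasing, right-continuous function, and let a > 0, B > 0 be constants such that t·f(s+t) ≤ B·(f(s))^{1+a} for all s ∈ ℝ and all t with 0 ≤ t ≤ 1. If f(0) < (2B)^{-1/a}, then f(s) = 0 for every s ≥ (2B/(1 − 2^{−a}))·(f(0))^{a}. -/
import Mathlib


/-- Quantitative De Giorgi-type iteration lemma: if `f : ℝ → [0,∞)` is decreasing,
right-continuous, satisfies `t * f (s + t) ≤ B * (f s) ^ (1 + a)` for all `s ∈ ℝ`,
`0 ≤ t ≤ 1`, and `f 0 < (2B)^(-1/a)`, then `f s = 0` for every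
`s ≥ (2B / (1 - 2^(-a))) * (f 0)^a`. -/
theorem stmt_1 (f : ℝ → ℝ)
    (hf_nonneg : ∀ s : ℝ, 0 ≤ f s)
    (hf_dec : Antitone f)
    (hf_rc : ∀ s : ℝ, ContinuousWithinAt f (Set.Ioi s) s)
    (a B : ℝ) (ha : 0 < a) (hB : 0 < B)
    (hiter : ∀ s t : ℝ, 0 ≤ t → t ≤ 1 → t * f (s + t) ≤ B * (f s) ^ (1 + a))
    (h0 : f 0 < (2 * B) ^ (-(1 / a))) :
    ∀ s : ℝ, (2 * B / (1 - (2 : ℝ) ^ (-a))) * (f 0) ^ a ≤ s → f s = 0 := by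
  intro s hs
  set r : ℝ := (2 : ℝ) ^ (-a) with hr
  have hr0 : 0 < r := Real.rpow_pos_of_pos two_pos _
  have hr1 : r < 1 := Real.rpow_lt_one_of_one_lt_of_neg one_lt_two (neg_lt_zero.mpr ha)
  have hf0 : 0 ≤ f 0 := hf_nonneg 0
  have h2B : (0:ℝ) < 2 * B := by linarith
  have hkey : f 0 ^ a < (2 * B)⁻¹ := by
    have h := Real.rpow_lt_rpow hf0 h0 ha
    rwa [← Real.rpow_mul h2B.le, neg_mul, one_div, inv_mul_cancel₀ ha.ne',
      Real.rpow_neg_one] at h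
  set σ : ℕ → ℝ := fun n => Nat.rec (0 : ℝ) (fun _ x => x + 2 * B * (f x) ^ a) n with hσ
  have hσs : ∀ n, σ (n + 1) = σ n + 2 * B * (f (σ n)) ^ a := fun n => rfl
  have half_pow : ((1:ℝ)/2) ^ a = r := by
    rw [hr, one_div, ← Real.rpow_neg_one (2:ℝ),
      ← Real.rpow_mul (by norm_num : (0:ℝ) ≤ 2)]
    norm_num
  have main : ∀ n : ℕ, 0 ≤ σ n ∧ f (σ n) ≤ f 0 * (1/2) ^ n ∧
      σ n ≤ 2 * B * (f 0) ^ a * ∑ k ∈ Finset.range n, r ^ k := by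
    intro n
    induction n with
    | zero => simp [hσ]
    | succ n ih =>
      obtain ⟨h1, h2, h3⟩ := ih
      set u := f (σ n) with hu
      have hu0 : 0 ≤ u := hf_nonneg _
      have huf0 : u ≤ f 0 := by
        have := hf_dec h1
        simpa [hu] using this
      have hua : u ^ a ≤ (f 0) ^ a := Real.rpow_le_rpow hu0 huf0 ha.le
      set t := 2 * B * u ^ a with htdef
      have ht0 : 0 ≤ t := by positivity
      have ht1 : t ≤ 1 := by
        have : t < 2 * B * (2 * B)⁻¹ := by
          apply mul_lt_mul_of_pos_left (lt_of_le_of_lt hua hkey) h2B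
        rw [mul_inv_cancel₀ h2B.ne'] at this
        exact this.le
      have hstep : f (σ (n + 1)) ≤ u / 2 := by
        rcases eq_or_lt_of_le hu0 with h | hupos
        · have hu0' : u = 0 := h.symm
          have ht' : t = 0 := by
            rw [htdef, hu0', Real.zero_rpow ha.ne', mul_zero]
          have : σ (n + 1) = σ n := by rw [hσs, ← htdef, ht', add_zero]
          rw [this, ← hu, hu0']
          norm_num
        · have htpos : 0 < t := by
            rw [htdef]; positivity
          have hit := hiter (σ n) t ht0 ht1
          rw [← hσs] at hit
          have hrw : B * u ^ (1 + a) = t * (u / 2) := by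
            rw [Real.rpow_add hupos, Real.rpow_one, htdef]
            ring
          rw [hrw] at hit
          exact le_of_mul_le_mul_left (by linarith [hit]) htpos
      constructor
      · rw [hσs]; positivity
      constructor
      · calc f (σ (n + 1)) ≤ u / 2 := hstep
          _ ≤ (f 0 * (1/2) ^ n) / 2 := by linarith
          _ = f 0 * (1/2) ^ (n + 1) := by ring
      · have hta : t ≤ 2 * B * (f 0) ^ a * r ^ n := by
          have : u ^ a ≤ (f 0 * (1/2) ^ n) ^ a := Real.rpow_le_rpow hu0 h2 ha.le
          rw [Real.mul_rpow hf0 (by positivity), ← Real.rpow_natCast ((1:ℝ)/2) n,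
            ← Real.rpow_mul (by norm_num), mul_comm (n:ℝ) a,
            Real.rpow_mul (by norm_num), half_pow, Real.rpow_natCast] at this
          rw [htdef]
          calc 2 * B * u ^ a ≤ 2 * B * ((f 0) ^ a * r ^ n) :=
                mul_le_mul_of_nonneg_left this (by positivity)
            _ = 2 * B * (f 0) ^ a * r ^ n := by ring
        rw [hσs, Finset.sum_range_succ, mul_add]
        exact add_le_add h3 hta
  -- conclude
  have hσle : ∀ n, σ n ≤ s := by
    intro n
    obtain ⟨_, _, h3⟩ := main n
    refine le_trans (le_trans h3 ?_) hs
    have hgeom : ∑ k ∈ Finset.range n, r ^ k ≤ (1 - r)⁻¹ := sum_le_hasSum (Finset.range n) (fun i _ => pow_nonneg hr0.le i)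
      (hasSum_geometric_of_lt_one hr0.le hr1)
    have hc : (0:ℝ) ≤ 2 * B * (f 0) ^ a := by positivity
    calc 2 * B * (f 0) ^ a * ∑ k ∈ Finset.range n, r ^ k
        ≤ 2 * B * (f 0) ^ a * (1 - r)⁻¹ := mul_le_mul_of_nonneg_left hgeom hc
      _ = 2 * B / (1 - r) * (f 0) ^ a := by ring
  have hfs : ∀ n : ℕ, f s ≤ f 0 * (1/2) ^ n := by
    intro n
    exact le_trans (hf_dec (hσle n)) (main n).2.1
  have hlim : Filter.Tendsto (fun n : ℕ => f 0 * (1/2:ℝ) ^ n) Filter.atTop (nhds 0) := by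
    have := tendsto_pow_atTop_nhds_zero_of_lt_one (by norm_num : (0:ℝ) ≤ 1/2)
      (by norm_num : (1/2:ℝ) < 1)
    simpa using this.const_mul (f 0)
  have : f s ≤ 0 := ge_of_tendsto' hlim hfs
  exact le_antisymm this (hf_nonneg s)
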